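/- Let y : ℤ → ℝ, let t be an integer and let δ ≥ 2 be a natural number. Let ī := (2t − δ + 1)/2 (the arithmetic mean of {t−δ+1, …, t}) and ȳ := (1/δ)·Σ_{i=t−δ+1}^{t} y(i). Then the ordinary-least-squares slope fitted to the δ points {(i, y(i)) : i = t−δ+1, …, t}, namely (Σ_{i=t−δ+1}^{t} (i − ī)·(y(i) − ȳ)) / (Σ_{i=t−δ+1}^{t} (i − ī)²), equals the convex combination of consecutive differences Σ_{t⁻=t−δ+2}^{t} μ̂_{t⁻} · (y(t⁻) − y(t⁻ − 1)). -/

import Mathlib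

open Finset

lemma sum_Icc_cast (a b : ℤ) (h : a ≤ b) :
    ∑ i ∈ Finset.Icc a b, (i : ℝ) = ((b : ℝ) - a + 1) * (a + b) / 2 := by
  revert h
  refine Int.le_induction (motive := fun b _ => ∑ i ∈ Finset.Icc a b, (i : ℝ) = ((b : ℝ) - a + 1) * (a + b) / 2) ?_ ?_ b
  · simp
  · intro n hn ih
    have : Finset.Icc a (n + 1) = insert (n + 1) (Finset.Icc a n) := by
      ext x; simp only [Finset.mem_Icc, Finset.mem_insert]; omega
    rw [this, Finset.sum_insert (by simp [Finset.mem_Icc]), ih]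
    push_cast
    ring

lemma abel_sum (c f : ℤ → ℝ) (a t : ℤ) (ha : a ≤ t)
    (h0 : ∑ i ∈ Finset.Icc a t, c i = 0) :
    ∑ i ∈ Finset.Icc a t, c i * f i
      = ∑ tm ∈ Finset.Icc (a + 1) t, (∑ i ∈ Finset.Icc tm t, c i) * (f tm - f (tm - 1)) := by
  set S : ℤ → ℝ := fun tm => ∑ i ∈ Finset.Icc tm t, c i with hS
  have hstep : ∀ tm ∈ Finset.Icc a t, c tm * f tm = (S tm - S (tm + 1)) * f tm := by
    intro tm htm
    simp only [Finset.mem_Icc] at htm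
    have hins : Finset.Icc tm t = insert tm (Finset.Icc (tm + 1) t) := by
      ext x; simp only [Finset.mem_Icc, Finset.mem_insert]; omega
    have : S tm = c tm + S (tm + 1) := by
      rw [hS]; simp only; rw [hins, Finset.sum_insert (by simp [Finset.mem_Icc])]
    rw [this]; ring
  rw [Finset.sum_congr rfl hstep]
  simp only [sub_mul, mul_sub, Finset.sum_sub_distrib]
  congr 1
  · -- ∑_{Icc a t} S tm * f tm = ∑_{Icc (a+1) t} S tm * f tm
    have hins : Finset.Icc a t = insert a (Finset.Icc (a + 1) t) := by
      ext x; simp only [Finset.mem_Icc, Finset.mem_insert]; omega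
    rw [hins, Finset.sum_insert (by simp [Finset.mem_Icc])]
    have : S a = 0 := h0
    rw [this, zero_mul, zero_add]
  · -- ∑_{Icc a t} S (tm+1) * f tm = ∑_{Icc (a+1) t} S tm * f (tm−1)
    have hmap : Finset.Icc (a + 1) t = (Finset.Icc a (t - 1)).map (addRightEmbedding 1) := by
      rw [Finset.map_add_right_Icc]; congr 1; omega
    rw [hmap, Finset.sum_map]
    simp only [addRightEmbedding_apply, add_sub_cancel_right]
    have hins : Finset.Icc a t = insert t (Finset.Icc a (t - 1)) := by
      ext x; simp only [Finset.mem_Icc, Finset.mem_insert]; omega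
    rw [hins, Finset.sum_insert (by simp [Finset.mem_Icc])]
    have : S (t + 1) = 0 := by rw [hS]; simp [Finset.Icc_eq_empty_of_lt]
    rw [this, zero_mul, zero_add]


/-- The OLS fitting-window weight
`μ̂_{t⁻} = (Σ_{i=t⁻}^{t} (i − (2t−δ+1)/2)) /
          (Σ_{i=t−δ+1}^{t} (i − (t−δ+1))·(i − (2t−δ+1)/2))`,
for a fitting window of size `δ` ending at day `t`, with arithmetic in `ℝ`. -/
noncomputable def olsWeight (t : ℤ) (δ : ℕ) (tm : ℤ) : ℝ :=
  (∑ i ∈ Finset.Icc tm t, ((i : ℝ) - (2 * (t : ℝ) - (δ : ℝ) + 1) / 2)) /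
  (∑ i ∈ Finset.Icc (t - (δ : ℤ) + 1) t,
    ((i : ℝ) - ((t : ℝ) - (δ : ℝ) + 1)) * ((i : ℝ) - (2 * (t : ℝ) - (δ : ℝ) + 1) / 2))

theorem stmt_6 (y : ℤ → ℝ) (t : ℤ) (δ : ℕ) (hδ : 2 ≤ δ) :
    (∑ i ∈ Finset.Icc (t - (δ : ℤ) + 1) t,
        ((i : ℝ) - (2 * (t : ℝ) - (δ : ℝ) + 1) / 2) *
          (y i - (1 / (δ : ℝ)) * ∑ j ∈ Finset.Icc (t - (δ : ℤ) + 1) t, y j)) /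
      (∑ i ∈ Finset.Icc (t - (δ : ℤ) + 1) t,
        ((i : ℝ) - (2 * (t : ℝ) - (δ : ℝ) + 1) / 2) ^ 2) =
    ∑ tm ∈ Finset.Icc (t - (δ : ℤ) + 2) t, olsWeight t δ tm * (y tm - y (tm - 1)) := by
  have hδ' : (2 : ℤ) ≤ (δ : ℤ) := by exact_mod_cast hδ
  set a : ℤ := t - (δ : ℤ) + 1 with ha_def
  have ha : a ≤ t := by omega
  have hcard : (Finset.Icc a t).card = δ := by
    rw [Int.card_Icc]; omega
  -- sum of the centered weights is zero
  have hc0 : ∑ i ∈ Finset.Icc a t,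
      ((i : ℝ) - (2 * (t : ℝ) - (δ : ℝ) + 1) / 2) = 0 := by
    rw [Finset.sum_sub_distrib, sum_Icc_cast a t ha, Finset.sum_const, hcard,
      nsmul_eq_mul, ha_def]
    push_cast
    ring
  -- numerator simplification
  have hnum : ∑ i ∈ Finset.Icc a t,
      ((i : ℝ) - (2 * (t : ℝ) - (δ : ℝ) + 1) / 2) *
        (y i - (1 / (δ : ℝ)) * ∑ j ∈ Finset.Icc a t, y j)
      = ∑ i ∈ Finset.Icc a t,
          ((i : ℝ) - (2 * (t : ℝ) - (δ : ℝ) + 1) / 2) * y i := by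
    simp only [mul_sub]
    rw [Finset.sum_sub_distrib, ← Finset.sum_mul, hc0, zero_mul, sub_zero]
  -- denominator equality
  have hden : ∑ i ∈ Finset.Icc a t,
      ((i : ℝ) - ((t : ℝ) - (δ : ℝ) + 1)) * ((i : ℝ) - (2 * (t : ℝ) - (δ : ℝ) + 1) / 2)
      = ∑ i ∈ Finset.Icc a t, ((i : ℝ) - (2 * (t : ℝ) - (δ : ℝ) + 1) / 2) ^ 2 := by
    have hterm : ∀ i ∈ Finset.Icc a t,
        ((i : ℝ) - ((t : ℝ) - (δ : ℝ) + 1)) * ((i : ℝ) - (2 * (t : ℝ) - (δ : ℝ) + 1) / 2)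
        = ((i : ℝ) - (2 * (t : ℝ) - (δ : ℝ) + 1) / 2) ^ 2
            + ((2 * (t : ℝ) - (δ : ℝ) + 1) / 2 - ((t : ℝ) - (δ : ℝ) + 1)) *
                ((i : ℝ) - (2 * (t : ℝ) - (δ : ℝ) + 1) / 2) := by
      intro i _; ring
    rw [Finset.sum_congr rfl hterm, Finset.sum_add_distrib, ← Finset.mul_sum, hc0,
      mul_zero, add_zero]
  -- Abel summation
  have habel := abel_sum (fun i => (i : ℝ) - (2 * (t : ℝ) - (δ : ℝ) + 1) / 2) y a t ha hc0
  have hidx : a + 1 = t - (δ : ℤ) + 2 := by omega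
  rw [hnum, habel, hidx, ← hden, Finset.sum_div]
  refine Finset.sum_congr rfl fun tm _ => ?_
  rw [olsWeight, ha_def, div_mul_eq_mul_div]
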